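/- For every integer n ≥ 2 and every ε ∈ (0,1), h(x, ε) tends to −n·k_n as x → +∞. -/

import Mathlib

/-- `k_n = (1/(4n)) · Σ_{k=1}^{n-1} 1/sin(kπ/n)` -/
noncomputable def kn (n : ℕ) : ℝ :=
  (1 / (4 * n)) * ∑ k ∈ Finset.Icc 1 (n - 1), 1 / Real.sin (k * Real.pi / n)

/-- `φ_k = (2k-1)π/n`, and `u_k = cos φ_k`. -/
noncomputable def phi (n k : ℕ) : ℝ := (2 * (k : ℝ) - 1) * Real.pi / n

/-- The reduced central configuration function
`h(x, ε) = −n·k_n·(ε−x³)/(1−x³) − (x²/(1−x³))·Σ_{k=1}^{n} [x(1−ε) − (1−εx²)u_k]/(1+x²−2xu_k)^{3/2}`,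
where `u_k = cos φ_k`.  Solutions of `h(x, ε) = μ` are the rosette central configurations. -/
noncomputable def h (n : ℕ) (x ε : ℝ) : ℝ :=
  -((n : ℝ) * kn n) * (ε - x ^ 3) / (1 - x ^ 3) -
    (x ^ 2 / (1 - x ^ 3)) * ∑ k ∈ Finset.Icc 1 n,
      (x * (1 - ε) - (1 - ε * x ^ 2) * Real.cos (phi n k)) /
        (1 + x ^ 2 - 2 * x * Real.cos (phi n k)) ^ ((3 : ℝ) / 2)

open Filter Real

lemma aux_term (ε u : ℝ) (hu : |u| ≤ 1) :
    Tendsto (fun x : ℝ => (x ^ 2 / (1 - x ^ 3)) *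
      ((x * (1 - ε) - (1 - ε * x ^ 2) * u) / (1 + x ^ 2 - 2 * x * u) ^ ((3 : ℝ) / 2)))
      atTop (nhds 0) := by
  have hu1 : u ≤ 1 := le_of_abs_le hu
  -- reference function
  have hnum : Tendsto (fun x : ℝ => (1 - ε) / x ^ 3 - u / x ^ 4 + ε * u / x ^ 2)
      atTop (nhds 0) := by
    have h1 : Tendsto (fun x : ℝ => (1 - ε) / x ^ 3) atTop (nhds 0) :=
      tendsto_const_nhds.div_atTop (tendsto_pow_atTop (by norm_num))
    have h2 : Tendsto (fun x : ℝ => u / x ^ 4) atTop (nhds 0) :=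
      tendsto_const_nhds.div_atTop (tendsto_pow_atTop (by norm_num))
    have h3 : Tendsto (fun x : ℝ => ε * u / x ^ 2) atTop (nhds 0) :=
      tendsto_const_nhds.div_atTop (tendsto_pow_atTop (by norm_num))
    simpa using (h1.sub h2).add h3
  have hden : Tendsto (fun x : ℝ => (1 / x ^ 3 - 1) * (1 / x ^ 2 + 1 - 2 * u / x) ^ ((3 : ℝ) / 2))
      atTop (nhds (-1)) := by
    have h1 : Tendsto (fun x : ℝ => 1 / x ^ 3 - 1) atTop (nhds (-1)) := by
      have := (tendsto_const_nhds.div_atTop (tendsto_pow_atTop (n := 3) (by norm_num))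
        : Tendsto (fun x : ℝ => 1 / x ^ 3) atTop (nhds 0))
      simpa using this.sub (tendsto_const_nhds (x := (1:ℝ)))
    have h2 : Tendsto (fun x : ℝ => 1 / x ^ 2 + 1 - 2 * u / x) atTop (nhds 1) := by
      have a1 : Tendsto (fun x : ℝ => 1 / x ^ 2) atTop (nhds 0) :=
        tendsto_const_nhds.div_atTop (tendsto_pow_atTop (by norm_num))
      have a2 : Tendsto (fun x : ℝ => 2 * u / x) atTop (nhds 0) :=
        tendsto_const_nhds.div_atTop tendsto_id
      simpa using (a1.add (tendsto_const_nhds (x := (1:ℝ)))).sub a2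
    have h3 : Tendsto (fun x : ℝ => (1 / x ^ 2 + 1 - 2 * u / x) ^ ((3 : ℝ) / 2))
        atTop (nhds 1) := by
      have := h2.rpow_const (p := (3:ℝ)/2) (Or.inl one_ne_zero)
      simpa using this
    simpa using h1.mul h3
  have hdiv : Tendsto (fun x : ℝ => ((1 - ε) / x ^ 3 - u / x ^ 4 + ε * u / x ^ 2) /
      ((1 / x ^ 3 - 1) * (1 / x ^ 2 + 1 - 2 * u / x) ^ ((3 : ℝ) / 2))) atTop (nhds 0) := by
    have := hnum.div hden (by norm_num)
    simpa [Pi.div_def] using this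
  refine hdiv.congr' ?_
  filter_upwards [eventually_gt_atTop (1:ℝ)] with x hx
  have hx0 : (0:ℝ) < x := lt_trans one_pos hx
  have hs : (0:ℝ) < 1 + x ^ 2 - 2 * x * u := by nlinarith
  have h1 : (1:ℝ) / x ^ 2 + 1 - 2 * u / x = (1 + x ^ 2 - 2 * x * u) / x ^ 2 := by
    field_simp
  have hx23 : ((x ^ 2 : ℝ)) ^ ((3:ℝ)/2) = x ^ 3 := by
    rw [← Real.rpow_natCast x 2, ← Real.rpow_mul hx0.le, ← Real.rpow_natCast x 3]
    norm_num
  have h2 : ((1 + x ^ 2 - 2 * x * u) / x ^ 2) ^ ((3:ℝ)/2)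
      = (1 + x ^ 2 - 2 * x * u) ^ ((3:ℝ)/2) / x ^ 3 := by
    rw [Real.div_rpow hs.le (sq_nonneg x), hx23]
  rw [h1, h2]
  have htpos : (0:ℝ) < (1 + x ^ 2 - 2 * x * u) ^ ((3:ℝ)/2) := Real.rpow_pos_of_pos hs _
  have hx3 : (1:ℝ) - x ^ 3 ≠ 0 := by nlinarith
  set t := (1 + x ^ 2 - 2 * x * u) ^ ((3:ℝ)/2) with ht
  field_simp
  ring


set_option linter.unusedVariables false in
/-- For `n ≥ 2`, `ε ∈ (0,1)`: `h(x, ε) → −n·k_n` as `x → +∞`. -/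
theorem h_tendsto_atTop (n : ℕ) (hn : 2 ≤ n) (ε : ℝ) (hε : ε ∈ Set.Ioo (0 : ℝ) 1) :
    Filter.Tendsto (fun x => h n x ε) Filter.atTop (nhds (-((n : ℝ) * kn n))) := by
  have hpiece1 : Tendsto (fun x : ℝ => (ε - x ^ 3) / (1 - x ^ 3)) atTop (nhds 1) := by
    have h1 : Tendsto (fun x : ℝ => ε / x ^ 3 - 1) atTop (nhds (-1)) := by
      have := (tendsto_const_nhds.div_atTop (tendsto_pow_atTop (n := 3) (by norm_num))
        : Tendsto (fun x : ℝ => ε / x ^ 3) atTop (nhds 0))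
      simpa using this.sub (tendsto_const_nhds (x := (1:ℝ)))
    have h2 : Tendsto (fun x : ℝ => 1 / x ^ 3 - 1) atTop (nhds (-1)) := by
      have := (tendsto_const_nhds.div_atTop (tendsto_pow_atTop (n := 3) (by norm_num))
        : Tendsto (fun x : ℝ => 1 / x ^ 3) atTop (nhds 0))
      simpa using this.sub (tendsto_const_nhds (x := (1:ℝ)))
    have hdiv := h1.div h2 (by norm_num)
    have : Tendsto (fun x : ℝ => (ε / x ^ 3 - 1) / (1 / x ^ 3 - 1)) atTop (nhds 1) := by
      simpa [Pi.div_def] using hdiv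
    refine this.congr' ?_
    filter_upwards [eventually_gt_atTop (1:ℝ)] with x hx
    have hx0 : (0:ℝ) < x := lt_trans one_pos hx
    have hx3 : (1:ℝ) - x ^ 3 ≠ 0 := by nlinarith [one_lt_pow₀ hx (three_ne_zero)]
    field_simp
  have hsum : Tendsto (fun x : ℝ => ∑ k ∈ Finset.Icc 1 n,
      (x ^ 2 / (1 - x ^ 3)) * ((x * (1 - ε) - (1 - ε * x ^ 2) * Real.cos (phi n k)) /
        (1 + x ^ 2 - 2 * x * Real.cos (phi n k)) ^ ((3 : ℝ) / 2))) atTop (nhds 0) := by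
    have := tendsto_finset_sum (Finset.Icc 1 n)
      (fun k _ => aux_term ε (Real.cos (phi n k)) (Real.abs_cos_le_one _))
    simpa using this
  have hmain := ((tendsto_const_nhds (x := -((n : ℝ) * kn n))).mul hpiece1).sub hsum
  have heq : (fun x : ℝ => -((n : ℝ) * kn n) * ((ε - x ^ 3) / (1 - x ^ 3)) -
      ∑ k ∈ Finset.Icc 1 n, (x ^ 2 / (1 - x ^ 3)) *
        ((x * (1 - ε) - (1 - ε * x ^ 2) * Real.cos (phi n k)) /
          (1 + x ^ 2 - 2 * x * Real.cos (phi n k)) ^ ((3 : ℝ) / 2)))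
      = fun x => h n x ε := by
    funext x
    simp only [h, Finset.mul_sum, mul_div_assoc]
  rw [heq] at hmain
  simpa using hmain
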